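/- Let α = (α_1, …, α_k) be a composition of positive integers such that α_i ≥ i for all 1 ≤ i ≤ k. Then I_α = Σ_{σ ∈ S_k} sign(σ) · R_{(α_1 − 1 + σ_1, α_2 − 2 + σ_2, …, α_k − k + σ_k)}, with the convention that R_β = 0 whenever β contains a part ≤ 0. -/

import Mathlib

open scoped BigOperators

/-- NSym modeled as the free noncommutative ℚ-algebra on generators indexed by ℕ
(the generator `n` playing the role of `H_n` for `n ≥ 1`). -/
abbrev NSym : Type := FreeAlgebra ℚ ℕ

/-- The complete homogeneous noncommutative symmetric functions, extended to ℤ: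
`H 0 = 1`, `H n = 0` for `n < 0`, and `H n` the `n`-th generator for `n ≥ 1`. -/
noncomputable def H (n : ℤ) : NSym :=
  if n < 0 then 0 else if n = 0 then 1 else FreeAlgebra.ι ℚ n.toNat

/-- `DecFrom k r ν` : `ν_r ≥ ν_{r+1} ≥ … ≥ ν_k` (1-based indexing). -/
def DecFrom (k r : ℕ) (ν : ℕ → ℕ) : Prop :=
  ∀ i, r ≤ i → i < k → ν (i + 1) ≤ ν i

/-- `(p,q)` is a boundary cell of the partial GBPR diagram `D^{(r-1)}_{μ/ν}`. -/
def IsBoundary (k r : ℕ) (μ : ℕ → ℤ) (ν : ℕ → ℕ) (p q : ℕ) : Prop :=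
  r ≤ p ∧ p ≤ k ∧
    (if p = r then
      ν r + 1 ≤ q ∧ (q : ℤ) ≤ max ((ν r : ℤ) + 1) (max (μ r) (2 * (ν r : ℤ) - μ r))
    else
      ν p + 1 ≤ q ∧ q ≤ ν (p - 1) + 1)

/-- `(p,q)` is a tunnel cell of `D^{(r-1)}_{μ/ν}`. -/
def IsTunnel (k r : ℕ) (μ : ℕ → ℤ) (ν : ℕ → ℕ) (p q : ℕ) : Prop :=
  IsBoundary k r μ ν p q ∧ q = ν p + 1

/-- The set of boundary cells of `D^{(r-1)}_{μ/ν}` not tunnel cells. -/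
def IsN (k r : ℕ) (μ : ℕ → ℤ) (ν : ℕ → ℕ) (p q : ℕ) : Prop :=
  IsBoundary k r μ ν p q ∧ ¬ IsTunnel k r μ ν p q

/-- The tunnel hook `h(r,τ)` for a tunnel cell `τ = (p,q)` of `D^{(r-1)}_{μ/ν}`:
all boundary cells in rows `r` through `p`. -/
def hook (k r : ℕ) (μ : ℕ → ℤ) (ν : ℕ → ℕ) (p : ℕ) : Set (ℕ × ℕ) :=
  {c : ℕ × ℕ | IsBoundary k r μ ν c.1 c.2 ∧ c.1 ≤ p}

/-- The value `Δ(h(r,τ)) = (μ_r − ν_r) + (ν_r + 1 − q) + (p − r)` for `τ = (p,q)`. -/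
def hookDelta (μ : ℕ → ℤ) (ν : ℕ → ℕ) (r p q : ℕ) : ℤ :=
  (μ r - (ν r : ℤ)) + (((ν r : ℤ) + 1) - (q : ℤ)) + ((p : ℤ) - (r : ℤ))

/-- The update `ν ↦ ν^{(r)}`: `ν'_i = ν_{i-1} + 1` for `r < i ≤ p`, else `ν'_i = ν_i`. -/
def nuUpdate (ν : ℕ → ℕ) (r p : ℕ) : ℕ → ℕ := fun i =>
  if r < i ∧ i ≤ p then ν (i - 1) + 1 else ν i

/-- The sequence `ν^{(0)}, ν^{(1)}, …` of intermediate shapes of a tunnel hook covering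
with terminal rows `p 1, p 2, …`. -/
def nuSeq (ν₀ : ℕ → ℕ) (p : ℕ → ℕ) : ℕ → ℕ → ℕ
  | 0 => ν₀
  | r + 1 => nuUpdate (nuSeq ν₀ p r) (r + 1) (p (r + 1))

/-- A tunnel hook covering of `D_{μ/ν₀}` : for each `r = 1, …, k` a tunnel cell
`(p r, q r)` of `D^{(r-1)}_{μ/ν^{(r-1)}}` (values outside `1 ≤ r ≤ k` normalized to `0`). -/
structure THC (k : ℕ) (μ : ℕ → ℤ) (ν₀ : ℕ → ℕ) where
  p : ℕ → ℕ
  q : ℕ → ℕ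
  tunnel : ∀ r, 1 ≤ r → r ≤ k → IsTunnel k r μ (nuSeq ν₀ p (r - 1)) (p r) (q r)
  p_out : ∀ r, r = 0 ∨ k < r → p r = 0
  q_out : ∀ r, r = 0 ∨ k < r → q r = 0

/-- Row-ordered noncommutative determinant (Laplace expansion from the top row down). -/
noncomputable def ndet {k : ℕ} (A : Fin k → Fin k → NSym) : NSym :=
  ∑ σ : Equiv.Perm (Fin k),
    ((Equiv.Perm.sign σ : ℤ) • (List.ofFn fun i => A i (σ i)).prod)

/-- The immaculate function `I_μ = ndet (H_{μ_i + j − i})` (1-based `μ`). -/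
noncomputable def Imm (k : ℕ) (μ : ℕ → ℤ) : NSym :=
  ndet fun i j : Fin k => H (μ (i.1 + 1) + ((j.1 : ℤ) + 1) - ((i.1 : ℤ) + 1))

/-- The skew immaculate function `I_{μ/ν} = ndet (H_{(μ_i − i) − (ν_j − j)})`. -/
noncomputable def ImmSkew (k : ℕ) (μ ν : ℕ → ℤ) : NSym :=
  ndet fun i j : Fin k =>
    H ((μ (i.1 + 1) - ((i.1 : ℤ) + 1)) - (ν (j.1 + 1) - ((j.1 : ℤ) + 1)))

/-- The signed product `∏_{r=1}^{k} ε(h(r,τ_r)) H_{Δ(h(r,τ_r))}` attached to a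
tunnel hook covering, the product taken in the order `r = 1, …, k`. -/
noncomputable def thcTerm (k : ℕ) (μ : ℕ → ℤ) (ν₀ : ℕ → ℕ) (γ : THC k μ ν₀) : NSym :=
  (List.ofFn fun r : Fin k =>
    (-1 : NSym) ^ (γ.p (r.1 + 1) - (r.1 + 1)) *
      H (hookDelta μ (nuSeq ν₀ γ.p r.1) (r.1 + 1) (γ.p (r.1 + 1)) (γ.q (r.1 + 1)))).prod
/-- Two cells are adjacent iff their taxicab distance is 1. -/
def Adj (c d : ℕ × ℕ) : Prop :=
  ((c.1 : ℤ) - (d.1 : ℤ)).natAbs + ((c.2 : ℤ) - (d.2 : ℤ)).natAbs = 1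

/-- A set of cells is connected: any two of its cells are joined by a chain of
cells of the set in which consecutive cells are adjacent. -/
def ConnectedSet (C : Set (ℕ × ℕ)) : Prop :=
  ∀ c ∈ C, ∀ d ∈ C, ∃ l : List (ℕ × ℕ),
    l.head? = some c ∧ l.getLast? = some d ∧ (∀ x ∈ l, x ∈ C) ∧ l.Chain' Adj

/-- `m_r = #{ i < r : σ_i > σ_r }`. -/
def mcount {k : ℕ} (σ : Equiv.Perm (Fin k)) (r : Fin k) : ℕ :=
  (Finset.univ.filter fun i : Fin k => i < r ∧ σ r < σ i).card

/-- The set `{σ_{r+1}, …, σ_k}` of one-line (1-based) values of `σ` at positions `> r`. -/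
def onelineTail {k : ℕ} (σ : Equiv.Perm (Fin k)) (r : ℕ) : Finset ℕ :=
  (Finset.univ.filter fun i : Fin k => r < i.1 + 1).image fun i => (σ i).1 + 1

/-- `beta σ r t` : the `t`-th smallest element of `{σ_{r+1}, …, σ_k}`. -/
def beta {k : ℕ} (σ : Equiv.Perm (Fin k)) (r t : ℕ) : ℕ :=
  ((onelineTail σ r).sort (· ≤ ·)).getD (t - 1) 0

/-- The exponent `δ` in the sign of a linear permutation `π ∈ A_{k,m}`. -/
def lpInv {k m : ℕ} (π : Fin m ↪ Fin k) : ℕ :=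
  (Finset.univ.filter fun p : Fin m × Fin m => p.1 < p.2 ∧ π p.2 < π p.1).card +
  (Finset.univ.filter fun p : Fin m × Fin k => (∀ t, π t ≠ p.2) ∧ p.2 < π p.1).card

/-- `betaC π j` : the `j`-th smallest element of `{1,…,k} ∖ {π_1,…,π_m}` (1-based values). -/
def betaC {k m : ℕ} (π : Fin m ↪ Fin k) (j : ℕ) : ℕ :=
  (((Finset.univ.filter fun q : Fin k => ∀ t, π t ≠ q).image fun q => q.1 + 1).sort
    (· ≤ ·)).getD (j - 1) 0

/-- Coarsening `Θ(α,S)` of a sequence: replace the comma at each position in `S`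
(1-based; position `i` lies between parts `i` and `i+1`) by addition. -/
def theta {α : Type} [Add α] (S : Finset ℕ) : ℕ → List α → List α
  | _, [] => []
  | _, [a] => [a]
  | i, a :: b :: rest =>
      if i ∈ S then theta S (i + 1) ((a + b) :: rest)
      else a :: theta S (i + 1) (b :: rest)
  termination_by i l => l.length

noncomputable def Hlist (β : List ℤ) : NSym := (β.map H).prod

/-- The ribbon function `R_β = Σ_{γ ⪰ β} (−1)^{ℓ(β)−ℓ(γ)} H_γ`, with `R_β = 0`
whenever `β` has a part `≤ 0`. -/
noncomputable def Ribbon (β : List ℤ) : NSym :=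
  if ∀ x ∈ β, 0 < x then
    ∑ S ∈ (Finset.Icc 1 (β.length - 1)).powerset,
      (-1 : NSym) ^ (β.length - (theta S 1 β).length) * Hlist (theta S 1 β)
  else 0


section Aux

theorem theta_cons' {γ : Type} [Add γ] (S : Finset ℕ) (i : ℕ) (a b : γ) (rest : List γ) :
    theta S i (a :: b :: rest) =
      if i ∈ S then theta S (i + 1) ((a + b) :: rest)
      else a :: theta S (i + 1) (b :: rest) := by
  rw [theta]

theorem theta_empty {γ : Type} [Add γ] (i : ℕ) (l : List γ) : theta ∅ i l = l := by
  induction l generalizing i with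
  | nil => simp [theta]
  | cons a t ih =>
    cases t with
    | nil => simp [theta]
    | cons b r => rw [theta_cons']; simp [ih]

theorem theta_merge_congr (S : Finset ℕ) :
    ∀ (pre : List ℤ) (j : ℕ) (a b a' b' : ℤ) (rest : List ℤ),
      (j + pre.length ∈ S) → (∀ m ∈ S, j + pre.length ≤ m) → a + b = a' + b' →
      theta S j (pre ++ a :: b :: rest) = theta S j (pre ++ a' :: b' :: rest) := by
  intro pre
  induction pre with
  | nil =>
    intro j a b a' b' rest hj _ hsum
    simp at hj
    simp only [List.nil_append, theta_cons', if_pos hj, hsum]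
  | cons c pre ih =>
    intro j a b a' b' rest hj hmin hsum
    have hjS : j ∉ S := by
      intro h
      have := hmin j h
      simp at this
    cases pre with
    | nil =>
      have hj' : j + 1 ∈ S := by simpa using hj
      simp only [List.cons_append, List.nil_append, theta_cons', if_neg hjS, if_pos hj', hsum]
    | cons d pre' =>
      simp only [List.cons_append, theta_cons', if_neg hjS]
      have := ih (j+1) a b a' b' rest
        (by simpa [Nat.add_comm, Nat.add_assoc, Nat.add_left_comm] using hj)
        (by intro m hm; have := hmin m hm; simp at this ⊢; omega) hsum
      simpa using this

theorem ofFn_decomp {k : ℕ} (g : Fin k → ℤ) (p : ℕ) (hp : p + 1 < k) :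
    List.ofFn g = (List.ofFn fun t : Fin p => g ⟨t.1, by omega⟩) ++
      g ⟨p, by omega⟩ :: g ⟨p+1, hp⟩ ::
        List.ofFn (fun t : Fin (k - (p+2)) => g ⟨p + 2 + t.1, by omega⟩) := by
  apply List.ext_getElem
  · simp; omega
  · intro n h1 h2
    simp only [List.getElem_ofFn, List.getElem_append, List.getElem_cons,
      List.length_ofFn]
    split_ifs <;> first | rfl | (congr 1; apply Fin.ext; simp; omega)

theorem theta_swap {k : ℕ} (f g : Fin k → ℤ) (p : ℕ) (hp : p + 1 < k)
    (hagree : ∀ r : Fin k, r.1 ≠ p → r.1 ≠ p + 1 → f r = g r)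
    (hsum : f ⟨p, by omega⟩ + f ⟨p+1, hp⟩ = g ⟨p, by omega⟩ + g ⟨p+1, hp⟩)
    (S : Finset ℕ) (hS : p + 1 ∈ S) (hmin : ∀ m ∈ S, p + 1 ≤ m) :
    theta S 1 (List.ofFn f) = theta S 1 (List.ofFn g) := by
  rw [ofFn_decomp f p hp, ofFn_decomp g p hp]
  have hpre : (List.ofFn fun t : Fin p => f ⟨t.1, by omega⟩) =
      (List.ofFn fun t : Fin p => g ⟨t.1, by omega⟩) := by
    apply congrArg; funext t
    have ht := t.isLt
    apply hagree <;> simp <;> omega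
  have hsuf : (List.ofFn fun t : Fin (k - (p+2)) => f ⟨p + 2 + t.1, by omega⟩) =
      (List.ofFn fun t : Fin (k - (p+2)) => g ⟨p + 2 + t.1, by omega⟩) := by
    apply congrArg; funext t
    have ht := t.isLt
    apply hagree <;> simp <;> omega
  rw [hpre, hsuf]
  exact theta_merge_congr S _ 1 _ _ _ _ _
    (by simpa [List.length_ofFn, Nat.add_comm] using hS)
    (by intro m hm; have := hmin m hm; simpa [List.length_ofFn, Nat.add_comm] using this)
    hsum

/-- The list `(α_1 − 1 + σ_1, …, α_k − k + σ_k)`. -/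
noncomputable def betaList (k : ℕ) (α : ℕ → ℤ) (σ : Equiv.Perm (Fin k)) : List ℤ :=
  List.ofFn fun r : Fin k => α (r.1 + 1) - ((r.1 : ℤ) + 1) + (((σ r : ℕ) : ℤ) + 1)

theorem betaList_length (k : ℕ) (α : ℕ → ℤ) (σ : Equiv.Perm (Fin k)) :
    (betaList k α σ).length = k := by simp [betaList]

end Aux

/-- **Theorem (ribbon expansion, staircase-dominating shapes).** If `α` is a composition
of positive integers with `α_i ≥ i` for all `1 ≤ i ≤ k`, then
`I_α = Σ_{σ ∈ S_k} sign(σ) R_{(α_1 − 1 + σ_1, …, α_k − k + σ_k)}`,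
with the convention that `R_β = 0` whenever `β` has a part `≤ 0`. -/
theorem immaculate_ribbon_expansion_staircase (k : ℕ) (hk : 1 ≤ k) (α : ℕ → ℤ)
    (hpos : ∀ i, 1 ≤ i → i ≤ k → 0 < α i)
    (hbig : ∀ i, 1 ≤ i → i ≤ k → (i : ℤ) ≤ α i) :
    Imm k α = ∑ σ : Equiv.Perm (Fin k),
      (Equiv.Perm.sign σ : ℤ) •
        Ribbon (List.ofFn fun r : Fin k =>
          α (r.1 + 1) - ((r.1 : ℤ) + 1) + (((σ r : ℕ) : ℤ) + 1)) := by
  classical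
  have hfold : ∀ σ : Equiv.Perm (Fin k),
      (List.ofFn fun r : Fin k =>
        α (r.1 + 1) - ((r.1 : ℤ) + 1) + (((σ r : ℕ) : ℤ) + 1)) = betaList k α σ :=
    fun _ => rfl
  have hposlist : ∀ σ : Equiv.Perm (Fin k), ∀ x ∈ betaList k α σ, 0 < x := by
    intro σ x hx
    rw [betaList, List.mem_ofFn] at hx
    obtain ⟨r, rfl⟩ := hx
    have hr := r.isLt
    have h1 := hbig (r.1 + 1) (by omega) (by omega)
    have h2 : (0:ℤ) ≤ (((σ r : ℕ) : ℤ)) := Int.natCast_nonneg _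
    push_cast at h1
    linarith
  have hrib : ∀ σ : Equiv.Perm (Fin k), Ribbon (betaList k α σ) =
      ∑ S ∈ (Finset.Icc 1 (k - 1)).powerset,
        (-1 : NSym) ^ (k - (theta S 1 (betaList k α σ)).length) *
          Hlist (theta S 1 (betaList k α σ)) := by
    intro σ
    rw [Ribbon, if_pos (hposlist σ), betaList_length]
  simp only [hfold, hrib, Finset.smul_sum]
  rw [Finset.sum_comm]
  have hzero : ∀ S ∈ (Finset.Icc 1 (k - 1)).powerset, S ≠ ∅ →
      (∑ σ : Equiv.Perm (Fin k), (Equiv.Perm.sign σ : ℤ) •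
        ((-1 : NSym) ^ (k - (theta S 1 (betaList k α σ)).length) *
          Hlist (theta S 1 (betaList k α σ)))) = 0 := by
    intro S hS hSne
    have hSsub := Finset.mem_powerset.mp hS
    have hne : S.Nonempty := Finset.nonempty_iff_ne_empty.mpr hSne
    set i := S.min' hne with hi
    have hiS : i ∈ S := S.min'_mem hne
    have hbounds := Finset.mem_Icc.mp (hSsub hiS)
    have hp : (i - 1) + 1 < k := by omega
    have hpi : (i - 1) + 1 = i := by omega
    set a : Fin k := ⟨i - 1, by omega⟩ with ha
    set b : Fin k := ⟨(i - 1) + 1, hp⟩ with hb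
    have hab : a ≠ b := by
      intro h
      have := congrArg Fin.val h
      simp [ha, hb] at this
    have hswap : ∀ σ : Equiv.Perm (Fin k),
        theta S 1 (betaList k α (σ * Equiv.swap a b)) = theta S 1 (betaList k α σ) := by
      intro σ
      rw [betaList, betaList]
      apply theta_swap _ _ (i - 1) hp
      · intro r h1 h2
        have hra : r ≠ a := by
          intro h; exact h1 (by rw [h])
        have hrb : r ≠ b := by
          intro h; exact h2 (by rw [h])
        have : (σ * Equiv.swap a b) r = σ r := by
          rw [Equiv.Perm.mul_apply, Equiv.swap_apply_of_ne_of_ne hra hrb]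
        rw [this]
      · have e1 : (⟨i - 1, by omega⟩ : Fin k) = a := rfl
        have e2 : (⟨(i - 1) + 1, hp⟩ : Fin k) = b := rfl
        rw [e1, e2]
        have f1 : (σ * Equiv.swap a b) a = σ b := by
          rw [Equiv.Perm.mul_apply, Equiv.swap_apply_left]
        have f2 : (σ * Equiv.swap a b) b = σ a := by
          rw [Equiv.Perm.mul_apply, Equiv.swap_apply_right]
        rw [f1, f2, ha, hb]
        push_cast
        ring
      · rw [hpi]; exact hiS
      · intro m hm; rw [hpi]; exact S.min'_le m hm
    set F : Equiv.Perm (Fin k) → NSym := fun σ =>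
      (Equiv.Perm.sign σ : ℤ) •
        ((-1 : NSym) ^ (k - (theta S 1 (betaList k α σ)).length) *
          Hlist (theta S 1 (betaList k α σ))) with hF
    have hterm : ∀ σ : Equiv.Perm (Fin k), F (σ * Equiv.swap a b) = - F σ := by
      intro σ
      rw [hF]
      simp only
      rw [hswap σ, Equiv.Perm.sign_mul, Equiv.Perm.sign_swap hab, mul_neg_one,
        Units.val_neg, neg_smul]
    have hrefl : (∑ σ : Equiv.Perm (Fin k), F σ) =
        ∑ σ : Equiv.Perm (Fin k), F (σ * Equiv.swap a b) :=
      (Fintype.sum_equiv (Equiv.mulRight (Equiv.swap a b))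
        (fun σ => F (σ * Equiv.swap a b)) F (fun σ => rfl)).symm
    have hneg : (∑ σ : Equiv.Perm (Fin k), F σ) = - ∑ σ : Equiv.Perm (Fin k), F σ :=
      calc (∑ σ : Equiv.Perm (Fin k), F σ)
          = ∑ σ : Equiv.Perm (Fin k), F (σ * Equiv.swap a b) := hrefl
        _ = ∑ σ : Equiv.Perm (Fin k), - F σ :=
            Finset.sum_congr rfl (fun σ _ => hterm σ)
        _ = - ∑ σ : Equiv.Perm (Fin k), F σ := Finset.sum_neg_distrib _
    have h2 : (2 : ℚ) • (∑ σ : Equiv.Perm (Fin k), F σ) = 0 := by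
      rw [two_smul]
      nth_rewrite 2 [hneg]
      exact add_neg_cancel _
    have := (smul_eq_zero.mp h2).resolve_left (by norm_num)
    exact this
  rw [Finset.sum_eq_single_of_mem ∅ (Finset.empty_mem_powerset _) hzero]
  simp only [theta_empty, betaList_length, Nat.sub_self, pow_zero, one_mul]
  rw [Imm, ndet]
  apply Finset.sum_congr rfl
  intro σ _
  congr 1
  rw [Hlist, betaList, List.map_ofFn]
  apply congrArg List.prod
  apply congrArg
  funext r
  simp only [Function.comp_apply]
  congr 1
  ring
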